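/- Let G be a k-tree and define the graph T(G) with vertex set the set of all k-cliques and (k+1)-cliques of G, and edges between M₁ and M₂ whenever M₁ ⊊ M₂. Then T(G) is a tree. -/

import Mathlib

/-- The edge set of a complete graph on the vertex set `V`. -/
def cliqueEdges (V : Finset ℕ) : Finset (Sym2 ℕ) :=
  ((V ×ˢ V).filter (fun p => p.1 ≠ p.2)).image (fun p => s(p.1, p.2))

/-- `X` is a clique with respect to the edge set `E`. -/
def IsCliqueIn (E : Finset (Sym2 ℕ)) (X : Finset ℕ) : Prop :=
  ∀ x ∈ X, ∀ y ∈ X, x ≠ y → s(x, y) ∈ E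

/-- Inductive definition of a `k`-tree with vertex set `V` and edge set `E`:
a `k`-clique is a `k`-tree, and one may add a new vertex joined to all
vertices of an existing `k`-clique (the support). -/
inductive IsKTree (k : ℕ) : Finset ℕ → Finset (Sym2 ℕ) → Prop where
  | base (V : Finset ℕ) (h : V.card = k) : IsKTree k V (cliqueEdges V)
  | extend (V : Finset ℕ) (E : Finset (Sym2 ℕ)) (X : Finset ℕ) (v : ℕ)
      (ht : IsKTree k V E) (hXV : X ⊆ V) (hX : X.card = k)
      (hclique : IsCliqueIn E X) (hv : v ∉ V) :
      IsKTree k (insert v V) (E ∪ X.image (fun x => s(x, v)))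
/-- The tree representation `T(G)` of a `k`-tree `G`: nodes are the
`k`-cliques and `(k+1)`-cliques of `G`, with an edge between `M₁` and `M₂`
whenever `M₁ ⊊ M₂` (or vice versa). -/
def treeRep (k : ℕ) (V : Finset ℕ) (E : Finset (Sym2 ℕ)) :
    SimpleGraph {M : Finset ℕ // M ⊆ V ∧ IsCliqueIn E M ∧ (M.card = k ∨ M.card = k + 1)} where
  Adj M₁ M₂ := M₁.1 ⊂ M₂.1 ∨ M₂.1 ⊂ M₁.1
  symm := by constructor; intro a b h; tauto
  loopless := by
    constructor
    intro a h
    rcases h with h' | h' <;> exact ssubset_irrefl _ h'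

open SimpleGraph Walk

lemma exists_two_nbrs {α : Type*} [DecidableEq α] {G : SimpleGraph α} {w x : α} (p : G.Walk w w)
    (hp : p.IsCycle) (hx : x ∈ p.support) :
    ∃ y z, y ≠ z ∧ G.Adj x y ∧ G.Adj x z ∧ y ∈ p.support ∧ z ∈ p.support := by
  have hmem : ∀ u, u ∈ (p.rotate x hx).support → u ∈ p.support := by
    intro u hu
    rw [Walk.support_eq_cons] at hu
    rcases List.mem_cons.mp hu with rfl | hu
    · exact hx
    · have hperm := p.support_rotate x hx
      have : u ∈ p.support.tail := hperm.perm.mem_iff.mp hu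
      rw [Walk.support_eq_cons p]
      exact List.mem_cons_of_mem _ this
  have hq : (p.rotate x hx).IsCycle := hp.rotate hx
  obtain ⟨b, hxb, r, hqe⟩ := Walk.not_nil_iff.mp hq.not_nil
  rw [hqe] at hq
  have hrpath : r.IsPath := ((Walk.cons_isCycle_iff r hxb).mp hq).1
  have hlen : 3 ≤ (Walk.cons hxb r).length := hq.three_le_length
  rw [Walk.length_cons] at hlen
  have hrnil : ¬ r.reverse.Nil := by
    rw [Walk.not_nil_iff_lt_length, Walk.length_reverse]; omega
  obtain ⟨c, hxc, r2, hre⟩ := Walk.not_nil_iff.mp hrnil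
  refine ⟨b, c, ?_, hxb, hxc, ?_, ?_⟩
  · rintro rfl
    have : r.reverse.IsPath := hrpath.reverse
    rw [hre] at this
    have h2 : r2.IsPath := ((Walk.cons_isPath_iff _ _).mp this).1
    have : r2 = Walk.nil := Walk.isPath_iff_eq_nil.mp h2
    rw [this] at hre
    have : r.reverse.length = 1 := by rw [hre]; simp
    rw [Walk.length_reverse] at this
    omega
  · apply hmem; rw [hqe, Walk.support_cons]
    exact List.mem_cons_of_mem _ r.start_mem_support
  · apply hmem; rw [hqe, Walk.support_cons]
    apply List.mem_cons_of_mem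
    have : c ∈ r.reverse.support := by rw [hre, Walk.support_cons]; exact List.mem_cons_of_mem _ r2.start_mem_support
    rwa [Walk.support_reverse, List.mem_reverse] at this

lemma edge_support {k : ℕ} {V : Finset ℕ} {E : Finset (Sym2 ℕ)} (h : IsKTree k V E) :
    ∀ e ∈ E, ∀ x ∈ e, x ∈ V := by
  induction h with
  | base V hV =>
    intro e he x hx
    simp only [cliqueEdges, Finset.mem_image, Finset.mem_filter, Finset.mem_product] at he
    obtain ⟨⟨a, b⟩, ⟨⟨ha, hb⟩, _⟩, rfl⟩ := he
    rcases Sym2.mem_iff.mp hx with rfl | rfl <;> assumption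
  | extend V E X v ht hXV hX hclique hv ih =>
    intro e he x hx
    rcases Finset.mem_union.mp he with he | he
    · exact Finset.mem_insert_of_mem (ih e he x hx)
    · obtain ⟨a, ha, rfl⟩ := Finset.mem_image.mp he
      rcases Sym2.mem_iff.mp hx with rfl | rfl
      · exact Finset.mem_insert_of_mem (hXV ha)
      · exact Finset.mem_insert_self _ _

abbrev IsNode (k : ℕ) (V : Finset ℕ) (E : Finset (Sym2 ℕ)) (M : Finset ℕ) : Prop :=
  M ⊆ V ∧ IsCliqueIn E M ∧ (M.card = k ∨ M.card = k + 1)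

def Gg (k : ℕ) (V : Finset ℕ) (E : Finset (Sym2 ℕ)) : SimpleGraph (Finset ℕ) where
  Adj M₁ M₂ := IsNode k V E M₁ ∧ IsNode k V E M₂ ∧ (M₁ ⊂ M₂ ∨ M₂ ⊂ M₁)
  symm := ⟨fun a b ⟨ha, hb, h⟩ => ⟨hb, ha, h.symm⟩⟩
  loopless := ⟨fun a ⟨_, _, h⟩ => by rcases h with h | h <;> exact ssubset_irrefl _ h⟩

section Extend

variable {k : ℕ} {V : Finset ℕ} {E : Finset (Sym2 ℕ)} {X : Finset ℕ} {v : ℕ}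

lemma node_mono (hM : IsNode k V E M) : IsNode k (insert v V) (E ∪ X.image (fun x => s(x, v))) M :=
  ⟨hM.1.trans (Finset.subset_insert _ _),
   fun x hx y hy hxy => Finset.mem_union_left _ (hM.2.1 x hx y hy hxy), hM.2.2⟩

variable (ht : IsKTree k V E) (hXV : X ⊆ V) (hX : X.card = k)
  (hclique : IsCliqueIn E X) (hv : v ∉ V)

include hv in
lemma old_node_of (hM : IsNode k (insert v V) (E ∪ X.image (fun x => s(x, v))) M)
    (hvM : v ∉ M) : IsNode k V E M := by
  refine ⟨?_, ?_, hM.2.2⟩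
  · intro x hx
    rcases Finset.mem_insert.mp (hM.1 hx) with rfl | h
    · exact absurd hx hvM
    · exact h
  · intro x hx y hy hxy
    rcases Finset.mem_union.mp (hM.2.1 x hx y hy hxy) with h | h
    · exact h
    · exfalso
      obtain ⟨a, _, heq⟩ := Finset.mem_image.mp h
      rcases Sym2.eq_iff.mp heq with ⟨_, rfl⟩ | ⟨_, rfl⟩
      · exact hvM hy
      · exact hvM hx

include ht hv in
lemma new_node_erase (hM : IsNode k (insert v V) (E ∪ X.image (fun x => s(x, v))) M)
    (hvM : v ∈ M) : M.erase v ⊆ X := by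
  intro x hx
  obtain ⟨hxv, hxM⟩ := Finset.mem_erase.mp hx
  have he : s(x, v) ∈ E ∪ X.image (fun x => s(x, v)) := hM.2.1 x hxM v hvM hxv
  rcases Finset.mem_union.mp he with h | h
  · exact absurd (edge_support ht _ h v (Sym2.mem_iff.mpr (Or.inr rfl))) hv
  · obtain ⟨a, ha, heq⟩ := Finset.mem_image.mp h
    rcases Sym2.eq_iff.mp heq with ⟨rfl, _⟩ | ⟨rfl, hvx⟩
    · exact ha
    · exact absurd hvx.symm hxv

include hXV hv in
lemma hvX : v ∉ X := fun h => hv (hXV h)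

include hXV hX hv in
lemma cardA : (insert v X).card = k + 1 := by
  rw [Finset.card_insert_of_notMem (hvX hXV hv), hX]

include hXV hX hclique hv in
lemma node_A : IsNode k (insert v V) (E ∪ X.image (fun x => s(x, v))) (insert v X) := by
  refine ⟨Finset.insert_subset_insert v hXV, ?_, Or.inr (cardA hXV hX hv)⟩
  intro x hx y hy hxy
  rcases Finset.mem_insert.mp hx with hxe | hx
  · rcases Finset.mem_insert.mp hy with hye | hy
    · exact absurd (hxe.trans hye.symm) hxy
    · rw [hxe]
      exact Finset.mem_union_right _ (Finset.mem_image.mpr ⟨y, hy, Sym2.eq_swap⟩)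
  · rcases Finset.mem_insert.mp hy with hye | hy
    · rw [hye]
      exact Finset.mem_union_right _ (Finset.mem_image.mpr ⟨x, hx, rfl⟩)
    · exact Finset.mem_union_left _ (hclique x hx y hy hxy)

include hXV hX hclique in
lemma node_X : IsNode k V E X := ⟨hXV, hclique, Or.inl hX⟩

include ht hX hv in
lemma eq_A_of (hM : IsNode k (insert v V) (E ∪ X.image (fun x => s(x, v))) M)
    (hvM : v ∈ M) (hc : M.card = k + 1) : M = insert v X := by
  have h1 : M.erase v ⊆ X := new_node_erase ht hv hM hvM
  have h2 : (M.erase v).card = k := by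
    rw [Finset.card_erase_of_mem hvM, hc]
    omega
  have h3 : M.erase v = X := Finset.eq_of_subset_of_card_le h1 (by omega)
  rw [← h3, Finset.insert_erase hvM]

include ht hXV hX hclique hv in
lemma adj_leaf_A (hM : IsNode k (insert v V) (E ∪ X.image (fun x => s(x, v))) M)
    (hvM : v ∈ M) (hc : M.card = k) :
    (Gg k (insert v V) (E ∪ X.image (fun x => s(x, v)))).Adj M (insert v X) := by
  refine ⟨hM, node_A hXV hX hclique hv, Or.inl ?_⟩
  rw [Finset.ssubset_iff_subset_ne]
  constructor
  · have : M = insert v (M.erase v) := (Finset.insert_erase hvM).symm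
    rw [this]
    exact Finset.insert_subset_insert v (new_node_erase ht hv hM hvM)
  · intro h
    rw [h, cardA hXV hX hv] at hc
    omega

include ht hXV hX hv in
lemma leaf_nbr (hM : IsNode k (insert v V) (E ∪ X.image (fun x => s(x, v))) M)
    (hvM : v ∈ M) (hc : M.card = k) {y : Finset ℕ}
    (hadj : (Gg k (insert v V) (E ∪ X.image (fun x => s(x, v)))).Adj M y) :
    y = insert v X := by
  obtain ⟨_, hy, hrel⟩ := hadj
  rcases hrel with h | h
  · have hcy : y.card = k + 1 := by
      have := Finset.card_lt_card h
      rcases hy.2.2 with h' | h' <;> omega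
    exact eq_A_of ht hX hv hy (h.1 hvM) hcy
  · exfalso
    have := Finset.card_lt_card h
    rcases hy.2.2 with h' | h' <;> omega

include ht hXV hX hclique hv in
lemma A_nbr {y : Finset ℕ}
    (hadj : (Gg k (insert v V) (E ∪ X.image (fun x => s(x, v)))).Adj (insert v X) y) :
    y = X ∨ (v ∈ y ∧ y.card = k) := by
  obtain ⟨_, hy, hrel⟩ := hadj
  have hcA : (insert v X).card = k + 1 := cardA hXV hX hv
  rcases hrel with h | h
  · exfalso
    have := Finset.card_lt_card h
    rcases hy.2.2 with h' | h' <;> omega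
  · have hcy : y.card = k := by
      have := Finset.card_lt_card h
      rcases hy.2.2 with h' | h' <;> omega
    by_cases hvy : v ∈ y
    · exact Or.inr ⟨hvy, hcy⟩
    · left
      have hsub : y ⊆ X := by
        intro x hx
        rcases Finset.mem_insert.mp (h.1 hx) with rfl | hx'
        · exact absurd hx hvy
        · exact hx'
      exact Finset.eq_of_subset_of_card_le hsub (by omega)

end Extend

lemma exists_node {k : ℕ} {V : Finset ℕ} {E : Finset (Sym2 ℕ)} (h : IsKTree k V E) :
    ∃ M, IsNode k V E M := by
  induction h with
  | base V hV =>
    refine ⟨V, Finset.Subset.refl V, ?_, Or.inl hV⟩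
    intro x hx y hy hxy
    exact Finset.mem_image.mpr ⟨(x, y), Finset.mem_filter.mpr
      ⟨Finset.mem_product.mpr ⟨hx, hy⟩, hxy⟩, rfl⟩
  | extend V E X v ht hXV hX hclique hv ih =>
    obtain ⟨M, hM⟩ := ih
    exact ⟨M, node_mono hM⟩

lemma main {k : ℕ} {V : Finset ℕ} {E : Finset (Sym2 ℕ)} (h : IsKTree k V E) :
    (Gg k V E).IsAcyclic ∧
      ∀ M₁ M₂, IsNode k V E M₁ → IsNode k V E M₂ → (Gg k V E).Reachable M₁ M₂ := by
  induction h with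
  | base V hV =>
    have huniq : ∀ M, IsNode k V (cliqueEdges V) M → M = V := by
      intro M hM
      exact Finset.eq_of_subset_of_card_le hM.1
        (by rcases hM.2.2 with h | h <;> omega)
    have hnoadj : ∀ a b, ¬ (Gg k V (cliqueEdges V)).Adj a b := by
      rintro a b ⟨ha, hb, hrel⟩
      rw [huniq a ha, huniq b hb] at hrel
      rcases hrel with h | h <;> exact ssubset_irrefl _ h
    constructor
    · intro w p hp
      cases p with
      | nil => exact Walk.IsCycle.not_of_nil hp
      | cons h q => exact hnoadj _ _ h
    · intro M₁ M₂ h1 h2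
      rw [huniq M₁ h1, huniq M₂ h2]
  | extend V E X v ht hXV hX hclique hv ih =>
    obtain ⟨acy, reach⟩ := ih
    constructor
    · intro w p hp
      have hnotleaf : ∀ u ∈ p.support, v ∈ u → u ≠ insert v X → False := by
        intro u hu hvu hne
        obtain ⟨y, z, hyz, hay, haz, _, _⟩ := exists_two_nbrs p hp hu
        have hNu := hay.1
        have hcard : u.card = k := by
          rcases hNu.2.2 with h | h
          · exact h
          · exact absurd (eq_A_of ht hX hv hNu hvu h) hne
        exact hyz ((leaf_nbr ht hXV hX hv hNu hvu hcard hay).trans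
          (leaf_nbr ht hXV hX hv hNu hvu hcard haz).symm)
      have hnov : ∀ u ∈ p.support, v ∉ u := by
        intro u hu hvu
        by_cases hne : u = insert v X
        · subst hne
          obtain ⟨y, z, hyz, hay, haz, hy, hz⟩ := exists_two_nbrs p hp hu
          have hyX : ∀ y', (Gg k (insert v V) (E ∪ X.image (fun x => s(x, v)))).Adj
              (insert v X) y' → y' ∈ p.support → y' = X := by
            intro y' ha' hy'
            rcases A_nbr ht hXV hX hclique hv ha' with h | ⟨h1, h2⟩
            · exact h
            · exfalso
              refine hnotleaf y' hy' h1 ?_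
              intro he
              rw [he, cardA hXV hX hv] at h2
              omega
          exact hyz ((hyX y hay hy).trans (hyX z haz hz).symm)
        · exact hnotleaf u hu hvu hne
      have hedges : ∀ e ∈ p.edges, e ∈ (Gg k V E).edgeSet := by
        intro e
        induction e using Sym2.ind with
        | _ a b =>
          intro he
          have hadj := p.adj_of_mem_edges he
          have haS : a ∈ p.support := p.fst_mem_support_of_mem_edges he
          have hbS : b ∈ p.support := p.snd_mem_support_of_mem_edges he
          have h1 : IsNode k V E a := old_node_of hv hadj.1 (hnov a haS)
          have h2 : IsNode k V E b := old_node_of hv hadj.2.1 (hnov b hbS)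
          exact (Gg k V E).mem_edgeSet.mpr ⟨h1, h2, hadj.2.2⟩
      exact acy (p.transfer _ hedges) (hp.transfer hedges)
    · have hGle : Gg k V E ≤ Gg k (insert v V) (E ∪ X.image (fun x => s(x, v))) := by
        rintro a b ⟨ha, hb, hrel⟩
        exact ⟨node_mono ha, node_mono hb, hrel⟩
      have hAX : (Gg k (insert v V) (E ∪ X.image (fun x => s(x, v)))).Adj (insert v X) X :=
        ⟨node_A hXV hX hclique hv, node_mono (node_X hXV hX hclique),
          Or.inr (Finset.ssubset_insert (hvX hXV hv))⟩
      have hr : ∀ M, IsNode k (insert v V) (E ∪ X.image (fun x => s(x, v))) M →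
          (Gg k (insert v V) (E ∪ X.image (fun x => s(x, v)))).Reachable M X := by
        intro M hM
        by_cases hvM : v ∈ M
        · rcases hM.2.2 with hc | hc
          · exact ((adj_leaf_A ht hXV hX hclique hv hM hvM hc).reachable).trans hAX.reachable
          · rw [eq_A_of ht hX hv hM hvM hc]
            exact hAX.reachable
        · exact Reachable.mono hGle (reach M X (old_node_of hv hM hvM) (node_X hXV hX hclique))
      intro M₁ M₂ h1 h2
      exact (hr M₁ h1).trans (hr M₂ h2).symm


lemma lift_reach {k : ℕ} {V : Finset ℕ} {E : Finset (Sym2 ℕ)} :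
    ∀ {a b : Finset ℕ} (p : (Gg k V E).Walk a b) (ha : IsNode k V E a) (hb : IsNode k V E b),
    (treeRep k V E).Reachable ⟨a, ha⟩ ⟨b, hb⟩ := by
  intro a b p
  induction p with
  | nil => intro ha hb; exact Reachable.refl _
  | @cons a c b h q ih =>
    intro ha hb
    exact (SimpleGraph.Adj.reachable
      (show (treeRep k V E).Adj ⟨a, ha⟩ ⟨c, h.2.1⟩ from h.2.2)).trans (ih h.2.1 hb)

/-- The tree representation `T(G)` of a `k`-tree `G` is a tree. -/
theorem treeRep_isTree (k : ℕ) (V : Finset ℕ) (E : Finset (Sym2 ℕ))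
    (h : IsKTree k V E) : (treeRep k V E).IsTree := by
  obtain ⟨acy, reach⟩ := main h
  constructor
  · obtain ⟨M, hM⟩ := exists_node h
    rw [SimpleGraph.connected_iff]
    refine ⟨?_, ⟨⟨M, hM⟩⟩⟩
    intro a b
    obtain ⟨p⟩ := reach a.1 b.1 a.2 b.2
    exact lift_reach p a.2 b.2
  · intro w p hp
    let f : treeRep k V E →g Gg k V E := ⟨Subtype.val, fun {a b} hab => ⟨a.2, b.2, hab⟩⟩
    have hinj : Function.Injective f := Subtype.val_injective
    exact acy (p.map f) ((Walk.map_isCycle_iff_of_injective hinj).mpr hp)
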